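/- Let A ∈ 𝓕 with P(A) > 0 and let 0 ≤ x₁ < x₂. Suppose that either x₁ = 0 or there exists λ₁ > 0 with E[ξ I(λ₁ξ) 1_A] = x₁. Then U(A, x₁) < U(A, x₂), i.e., the value function x⁺ ↦ U(A, x⁺) = sup_{Z ∈ H₁(A, x⁺)} E[u(Z⁺)] is strictly increasing. -/

import Mathlib

open MeasureTheory Set Filter
open scoped Classical ENNReal Topology

noncomputable section

variable {Ω : Type*} [MeasurableSpace Ω]

/-- The set `H₁(A, x⁺)` of admissible gain parts. -/
def H1 (P : Measure Ω) (ξ : Ω → ℝ) (A : Set Ω) (x : ℝ) : Set (Ω → ℝ) :=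
  {Z | Integrable (fun ω => ξ ω * Z ω) P ∧ (∫ ω, ξ ω * Z ω ∂P) ≤ x ∧
    (∀ᵐ ω ∂P, ω ∉ A → Z ω = 0) ∧ (∀ᵐ ω ∂P, ω ∈ A → 0 ≤ Z ω)}

/-- `E[u(Z⁺)]`. -/
def Uof (P : Measure Ω) (u : ℝ → ℝ) (Z : Ω → ℝ) : ℝ := ∫ ω, u (max (Z ω) 0) ∂P

/-- The value function `U(A, x⁺) = sup {E[u(Z⁺)] : Z ∈ H₁(A,x⁺)}`, as an extended real. -/
def Uval (P : Measure Ω) (ξ : Ω → ℝ) (u : ℝ → ℝ) (A : Set Ω) (x : ℝ) : EReal :=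
  sSup ((fun Z => ((Uof P u Z : ℝ) : EReal)) '' H1 P ξ A x)

/-- The convex conjugate `v(y) = sup_{x ≥ 0} (u(x) - x y)`. -/
def vconj (u : ℝ → ℝ) (y : ℝ) : ℝ := sSup {z | ∃ x ≥ (0:ℝ), z = u x - x * y}


lemma concave_secant_anti {u : ℝ → ℝ} (hc : ConcaveOn ℝ (Ici 0) u) {a x y : ℝ}
    (ha : 0 ≤ a) (hx : 0 ≤ x) (hy : 0 ≤ y) (hxa : x ≠ a) (hya : y ≠ a) (hxy : x ≤ y) :
    (u y - u a) / (y - a) ≤ (u x - u a) / (x - a) := by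
  have h := hc.neg.secant_mono ha hx hy hxa hya hxy
  simp only [Pi.neg_apply] at h
  rw [show -u x - -u a = -(u x - u a) from by ring,
    show -u y - -u a = -(u y - u a) from by ring, neg_div, neg_div, neg_le_neg_iff] at h
  exact h

lemma slope_le_deriv {u u' : ℝ → ℝ}
    (hu_d1 : ∀ x ∈ Ici (0:ℝ), HasDerivWithinAt u (u' x) (Ici 0) x)
    (hc : ConcaveOn ℝ (Ici 0) u) {a b : ℝ} (ha : 0 ≤ a) (hab : a < b) :
    (u b - u a) / (b - a) ≤ u' a := by
  have ht := (hasDerivWithinAt_iff_tendsto_slope).1 (hu_d1 a ha)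
  have hne : (𝓝[(Ici 0 \ {a} : Set ℝ)] a).NeBot := by
    refine Filter.neBot_of_le (f := 𝓝[(Ioi a : Set ℝ)] a) (nhdsWithin_mono _ ?_)
    intro z hz; exact ⟨le_trans ha (le_of_lt hz), ne_of_gt hz⟩
  refine ge_of_tendsto ht ?_
  filter_upwards [nhdsWithin_le_nhds (Iio_mem_nhds hab), self_mem_nhdsWithin] with y hyb hy
  rw [slope_def_field]
  exact concave_secant_anti hc ha hy.1 (le_trans ha (le_of_lt hab)) hy.2 (ne_of_gt hab) (le_of_lt hyb)

lemma deriv_le_slope {u u' : ℝ → ℝ}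
    (hu_d1 : ∀ x ∈ Ici (0:ℝ), HasDerivWithinAt u (u' x) (Ici 0) x)
    (hc : ConcaveOn ℝ (Ici 0) u) {a b : ℝ} (ha : 0 ≤ a) (hab : a < b) :
    u' b ≤ (u b - u a) / (b - a) := by
  have hb : (0:ℝ) ≤ b := le_trans ha (le_of_lt hab)
  have ht := (hasDerivWithinAt_iff_tendsto_slope).1 (hu_d1 b hb)
  have hne : (𝓝[(Ici 0 \ {b} : Set ℝ)] b).NeBot := by
    refine Filter.neBot_of_le (f := 𝓝[(Ioi b : Set ℝ)] b) (nhdsWithin_mono _ ?_)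
    intro z hz; exact ⟨le_trans hb (le_of_lt hz), ne_of_gt hz⟩
  refine le_of_tendsto ht ?_
  filter_upwards [nhdsWithin_le_nhds (Ioi_mem_nhds hab), self_mem_nhdsWithin] with y hya hy
  rw [slope_def_field]
  have := concave_secant_anti hc hb ha hy.1 (ne_of_lt hab) hy.2 (le_of_lt hya)
  rw [show (u a - u b)/(a - b) = (u b - u a)/(b - a) from by rw [← neg_div_neg_eq]; ring_nf] at this
  exact this

lemma deriv_strictAnti {u u' : ℝ → ℝ}
    (hu_d1 : ∀ x ∈ Ici (0:ℝ), HasDerivWithinAt u (u' x) (Ici 0) x)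
    (hc : StrictConcaveOn ℝ (Ici 0) u) {a b : ℝ} (ha : 0 ≤ a) (hab : a < b) :
    u' b < u' a := by
  set m := (a + b) / 2 with hm
  have ham : a < m := by rw [hm]; linarith
  have hmb : m < b := by rw [hm]; linarith
  have h1 := slope_le_deriv hu_d1 hc.concaveOn ha ham
  have h2 := hc.slope_anti_adjacent (x := a) (y := m) (z := b) ha
    (le_trans ha (le_of_lt (ham.trans hmb))) ham hmb
  have h3 := deriv_le_slope hu_d1 hc.concaveOn (le_trans ha (le_of_lt ham)) hmb
  calc u' b ≤ (u b - u m) / (b - m) := h3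
    _ < (u m - u a) / (m - a) := h2
    _ ≤ u' a := h1

lemma deriv_pos {u u' : ℝ → ℝ}
    (hu_d1 : ∀ x ∈ Ici (0:ℝ), HasDerivWithinAt u (u' x) (Ici 0) x)
    (hc : StrictConcaveOn ℝ (Ici 0) u) (hm : StrictMonoOn u (Ici 0))
    {a : ℝ} (ha : 0 ≤ a) : 0 < u' a := by
  have h1 := slope_le_deriv hu_d1 hc.concaveOn ha (lt_add_one a)
  have h2 : u a < u (a + 1) := hm ha (by simp; linarith) (lt_add_one a)
  have : 0 < (u (a+1) - u a) / (a + 1 - a) := by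
    apply div_pos (by linarith) (by linarith)
  linarith

/-- Mean value theorem adapted to our setting. -/
lemma mvt_aux {u u' : ℝ → ℝ}
    (hu_d1 : ∀ x ∈ Ici (0:ℝ), HasDerivWithinAt u (u' x) (Ici 0) x)
    {a b : ℝ} (ha : 0 ≤ a) (hab : a < b) :
    ∃ c, a < c ∧ c < b ∧ u b - u a = u' c * (b - a) := by
  have hcont : ContinuousOn u (Icc a b) := by
    intro x hx
    exact ((hu_d1 x (le_trans ha hx.1)).continuousWithinAt).mono
      (fun z hz => le_trans ha hz.1)
  have hderiv : ∀ x ∈ Ioo a b, HasDerivAt u (u' x) x := by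
    intro x hx
    have hx0 : 0 < x := lt_of_le_of_lt ha hx.1
    exact (hu_d1 x (le_of_lt hx0)).hasDerivAt (Ici_mem_nhds hx0)
  obtain ⟨c, hc, hceq⟩ := exists_hasDerivAt_eq_slope u u' hab hcont hderiv
  refine ⟨c, hc.1, hc.2, ?_⟩
  rw [hceq, div_mul_eq_mul_div, mul_div_assoc, div_self (by linarith : b - a ≠ 0), mul_one]

lemma trichotomy_aux {u' u'' : ℝ → ℝ}
    (hu_d2 : ∀ x ∈ Ici (0:ℝ), HasDerivWithinAt u' (u'' x) (Ici 0) x)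
    (hu'lim : Tendsto u' atTop (nhds 0)) {y : ℝ} (hy : 0 < y) :
    (∃ x > (0:ℝ), u' x = y) ∨ (∀ x > (0:ℝ), u' x < y) := by
  by_cases h : ∃ x > (0:ℝ), u' x = y
  · exact Or.inl h
  · push_neg at h
    right
    intro x hx
    rcases lt_or_ge (u' x) y with h1 | h1
    · exact h1
    have h1' : y < u' x := lt_of_le_of_ne h1 (fun hh => h x hx hh.symm)
    -- find x₁ > x with u' x₁ < y
    have : ∀ᶠ t in atTop, u' t < y ∧ x < t := by
      filter_upwards [hu'lim (Iio_mem_nhds hy), eventually_gt_atTop x] with t h2 h3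
      exact ⟨h2, h3⟩
    obtain ⟨t, ht1, ht2⟩ := this.exists
    have hcont : ContinuousOn u' (Icc x t) := by
      intro z hz
      exact ((hu_d2 z (le_trans (le_of_lt hx) hz.1)).continuousWithinAt).mono
        (fun w hw => le_trans (le_of_lt hx) hw.1)
    have hmem : y ∈ Icc (u' t) (u' x) := ⟨le_of_lt ht1, le_of_lt h1'⟩
    obtain ⟨c, hc, hcy⟩ := intermediate_value_Icc' (le_of_lt ht2) hcont hmem
    exact absurd hcy (h c (lt_of_lt_of_le hx hc.1))


lemma v_isGreatest {u u' u'' I : ℝ → ℝ}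
    (hu_d1 : ∀ x ∈ Ici (0:ℝ), HasDerivWithinAt u (u' x) (Ici 0) x)
    (hu_d2 : ∀ x ∈ Ici (0:ℝ), HasDerivWithinAt u' (u'' x) (Ici 0) x)
    (hc : StrictConcaveOn ℝ (Ici 0) u)
    (hu0 : u 0 = 0)
    (hu'lim : Tendsto u' atTop (nhds 0))
    (hI1 : ∀ y : ℝ, 0 < y → (∃ x > (0:ℝ), u' x = y) → 0 < I y ∧ u' (I y) = y)
    (hI2 : ∀ y : ℝ, 0 < y → (∀ x > (0:ℝ), u' x < y) → I y = 0)
    {y : ℝ} (hy : 0 < y) :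
    0 ≤ I y ∧ IsGreatest {z | ∃ x ≥ (0:ℝ), z = u x - x * y} (u (I y) - I y * y) := by
  rcases trichotomy_aux hu_d2 hu'lim hy with hcase | hcase
  · obtain ⟨hIpos, hIder⟩ := hI1 y hy hcase
    refine ⟨le_of_lt hIpos, ⟨⟨I y, le_of_lt hIpos, rfl⟩, ?_⟩⟩
    rintro z ⟨x, hx, rfl⟩
    rcases lt_trichotomy x (I y) with hlt | heq | hgt
    · obtain ⟨c, hc1, hc2, hc3⟩ := mvt_aux hu_d1 hx hlt
      have hcd : y < u' c := by
        rw [← hIder]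
        exact deriv_strictAnti hu_d1 hc (le_trans hx (le_of_lt hc1)) hc2
      nlinarith
    · rw [heq]
    · obtain ⟨c, hc1, hc2, hc3⟩ := mvt_aux hu_d1 (le_of_lt hIpos) hgt
      have hcd : u' c < y := by
        rw [← hIder]
        exact deriv_strictAnti hu_d1 hc (le_of_lt hIpos) hc1
      nlinarith
  · have hI0 : I y = 0 := hI2 y hy hcase
    rw [hI0]
    refine ⟨le_refl 0, ⟨⟨0, le_refl 0, by ring⟩, ?_⟩⟩
    rintro z ⟨x, hx, rfl⟩
    rcases eq_or_lt_of_le hx with heq | hpos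
    · rw [← heq]
    · obtain ⟨c, hc1, hc2, hc3⟩ := mvt_aux hu_d1 (le_refl 0) hpos
      have hcd : u' c < y := hcase c hc1
      rw [hu0] at hc3
      nlinarith

lemma restrict_pos_int {Ω : Type*} [MeasurableSpace Ω] (P : Measure Ω)
    {ξ : Ω → ℝ} (hξpos : ∀ᵐ ω ∂P, 0 < ξ ω) (hξint : Integrable ξ P)
    {A : Set Ω} (hA : MeasurableSet A) (hPA : 0 < P A) :
    0 < ∫ ω in A, ξ ω ∂P := by
  have h0 : 0 ≤ᵐ[P.restrict A] ξ := ae_restrict_of_ae (hξpos.mono fun ω h => le_of_lt h)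
  rcases lt_or_ge 0 (∫ ω in A, ξ ω ∂P) with h | h
  · exact h
  exfalso
  have hz : (∫ ω in A, ξ ω ∂P) = 0 := le_antisymm h (integral_nonneg_of_ae h0)
  have heq : ξ =ᵐ[P.restrict A] 0 :=
    (integral_eq_zero_iff_of_nonneg_ae h0 hξint.integrableOn).1 hz
  have : ∀ᵐ ω ∂P.restrict A, False := by
    filter_upwards [heq, ae_restrict_of_ae hξpos] with ω h1 h2
    rw [h1] at h2; exact lt_irrefl 0 h2
  have hzero : P.restrict A Set.univ = 0 := by
    simpa using this
  rw [Measure.restrict_apply_univ] at hzero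
  exact absurd hzero (ne_of_gt hPA)

lemma key_bound {Ω : Type*} [MeasurableSpace Ω] (P : Measure Ω) [IsProbabilityMeasure P]
    {ξ : Ω → ℝ} (hξm : Measurable ξ) (hξpos : ∀ᵐ ω ∂P, 0 < ξ ω)
    {u : ℝ → ℝ} (hu_cont : ContinuousOn u (Ici 0)) (hu_monon : MonotoneOn u (Ici 0))
    (hu0 : u 0 = 0)
    (hub : ∀ y : ℝ, 0 < y → ∀ x : ℝ, 0 ≤ x → u x - x * y ≤ vconj u y)
    {A : Set Ω} (hA : MeasurableSet A)
    {l : ℝ} (hl : 0 < l)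
    (hvint : Integrable (fun ω => vconj u (l * ξ ω)) P)
    {Z : Ω → ℝ} (hZint : Integrable (fun ω => ξ ω * Z ω) P)
    (hZoff : ∀ᵐ ω ∂P, ω ∉ A → Z ω = 0) (hZon : ∀ᵐ ω ∂P, ω ∈ A → 0 ≤ Z ω) :
    Integrable (fun ω => u (max (Z ω) 0)) P ∧
    (∫ ω, u (max (Z ω) 0) ∂P) ≤
      (∫ ω, A.indicator (fun ω' => vconj u (l * ξ ω')) ω ∂P) + l * (∫ ω, ξ ω * Z ω ∂P) := by
  set g := fun ω => A.indicator (fun ω' => vconj u (l * ξ ω')) ω + l * (ξ ω * Z ω) with hgdef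
  have hg : Integrable g P := (hvint.indicator hA).add (hZint.const_mul l)
  have hptw : ∀ᵐ ω ∂P, 0 ≤ u (max (Z ω) 0) ∧ u (max (Z ω) 0) ≤ g ω := by
    filter_upwards [hξpos, hZoff, hZon] with ω h1 h2 h3
    by_cases hω : ω ∈ A
    · have hz0 : 0 ≤ Z ω := h3 hω
      have hmax : max (Z ω) 0 = Z ω := max_eq_left hz0
      constructor
      · rw [hmax, ← hu0]
        exact hu_monon (le_refl (0:ℝ)) hz0 hz0
      · have hy : 0 < l * ξ ω := mul_pos hl h1
        have h4 := hub (l * ξ ω) hy (Z ω) hz0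
        have h5 : Z ω * (l * ξ ω) = l * (ξ ω * Z ω) := by ring
        rw [hgdef]
        simp only [Set.indicator_of_mem hω]
        rw [hmax]
        linarith
    · have hz : Z ω = 0 := h2 hω
      rw [hgdef]
      simp [hz, hu0, Set.indicator_of_notMem hω]
  -- measurability
  have hZm : AEMeasurable Z P := by
    have h1 : AEMeasurable (fun ω => (ξ ω * Z ω) * (ξ ω)⁻¹) P :=
      hZint.1.aemeasurable.mul (hξm.inv.aemeasurable)
    refine h1.congr ?_
    filter_upwards [hξpos] with ω h
    field_simp
  have hut : Continuous (fun x : ℝ => u (max x 0)) := by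
    refine hu_cont.comp_continuous (continuous_id.max continuous_const) ?_
    intro x; exact mem_Ici.mpr (le_max_right x 0)
  have hcomp : AEMeasurable (fun ω => u (max (Z ω) 0)) P :=
    hut.measurable.comp_aemeasurable hZm
  have hint : Integrable (fun ω => u (max (Z ω) 0)) P := by
    refine Integrable.mono' hg hcomp.aestronglyMeasurable ?_
    filter_upwards [hptw] with ω h
    rw [Real.norm_eq_abs, abs_of_nonneg h.1]
    exact h.2
  refine ⟨hint, ?_⟩
  have hle : (∫ ω, u (max (Z ω) 0) ∂P) ≤ ∫ ω, g ω ∂P := by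
    refine integral_mono_ae hint hg ?_
    filter_upwards [hptw] with ω h using h.2
  calc (∫ ω, u (max (Z ω) 0) ∂P) ≤ ∫ ω, g ω ∂P := hle
    _ = (∫ ω, A.indicator (fun ω' => vconj u (l * ξ ω')) ω ∂P)
        + l * (∫ ω, ξ ω * Z ω ∂P) := by
      rw [hgdef, integral_add (hvint.indicator hA) (hZint.const_mul l), integral_const_mul]


theorem stmt1
    (P : Measure Ω) [IsProbabilityMeasure P]
    (ξ : Ω → ℝ) (hξm : Measurable ξ)
    (hξpos : ∀ᵐ ω ∂P, 0 < ξ ω)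
    (hξint : Integrable ξ P) (hξ1 : (∫ ω, ξ ω ∂P) = 1)
    (u u' u'' : ℝ → ℝ)
    (hu_d1 : ∀ x ∈ Ici (0:ℝ), HasDerivWithinAt u (u' x) (Ici 0) x)
    (hu_d2 : ∀ x ∈ Ici (0:ℝ), HasDerivWithinAt u' (u'' x) (Ici 0) x)
    (hu_conc : StrictConcaveOn ℝ (Ici 0) u)
    (hu_mono : StrictMonoOn u (Ici 0))
    (hu0 : u 0 = 0)
    (hu'lim : Tendsto u' atTop (nhds 0))
    (hv_int : ∀ l : ℝ, 0 < l → Integrable (fun ω => vconj u (l * ξ ω)) P)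
    (I : ℝ → ℝ)
    (hI1 : ∀ y : ℝ, 0 < y → (∃ x > (0:ℝ), u' x = y) → 0 < I y ∧ u' (I y) = y)
    (hI2 : ∀ y : ℝ, 0 < y → (∀ x > (0:ℝ), u' x < y) → I y = 0)
    (A : Set Ω) (hA : MeasurableSet A) (hPA : 0 < P A)
    (x1 x2 : ℝ) (hx1 : 0 ≤ x1) (h12 : x1 < x2)
    (hsol : x1 = 0 ∨ ∃ l : ℝ, 0 < l ∧
      (∫ ω, ξ ω * A.indicator (fun ω' => I (l * ξ ω')) ω ∂P) = x1) :
    Uval P ξ u A x1 < Uval P ξ u A x2 := by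
  have hu_cont : ContinuousOn u (Ici 0) := fun x hx => (hu_d1 x hx).continuousWithinAt
  have hu_monon : MonotoneOn u (Ici 0) := hu_mono.monotoneOn
  have hIval : ∀ y : ℝ, 0 < y → 0 ≤ I y ∧ vconj u y = u (I y) - I y * y := by
    intro y hy
    obtain ⟨h0, hg⟩ := v_isGreatest hu_d1 hu_d2 hu_conc hu0 hu'lim hI1 hI2 hy
    exact ⟨h0, hg.csSup_eq⟩
  have hub : ∀ y : ℝ, 0 < y → ∀ x : ℝ, 0 ≤ x → u x - x * y ≤ vconj u y := by
    intro y hy x hx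
    obtain ⟨h0, hg⟩ := v_isGreatest hu_d1 hu_d2 hu_conc hu0 hu'lim hI1 hI2 hy
    have h2 := hg.2 ⟨x, hx, rfl⟩
    rw [show vconj u y = u (I y) - I y * y from hg.csSup_eq]
    exact h2
  have hB : 0 < ∫ ω in A, ξ ω ∂P := restrict_pos_int P hξpos hξint hA hPA
  rcases eq_or_lt_of_le hx1 with hx0 | hx1pos
  · -- case x1 = 0
    obtain rfl : x1 = 0 := hx0.symm
    have him : (fun Z => ((Uof P u Z : ℝ) : EReal)) '' H1 P ξ A 0 = {(0 : EReal)} := by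
      apply Subset.antisymm
      · rintro e ⟨Z, ⟨hZint, hZle, hZoff, hZon⟩, rfl⟩
        have hnn : ∀ᵐ ω ∂P, 0 ≤ ξ ω * Z ω := by
          filter_upwards [hξpos, hZoff, hZon] with ω h1 h2 h3
          by_cases hω : ω ∈ A
          · exact mul_nonneg h1.le (h3 hω)
          · simp [h2 hω]
        have h0 : (∫ ω, ξ ω * Z ω ∂P) = 0 := le_antisymm hZle (integral_nonneg_of_ae hnn)
        have hZ0 : (fun ω => ξ ω * Z ω) =ᵐ[P] 0 :=
          (integral_eq_zero_iff_of_nonneg_ae hnn hZint).1 h0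
        have hZz : ∀ᵐ ω ∂P, Z ω = 0 := by
          filter_upwards [hZ0, hξpos] with ω h1 h2
          have h1' : ξ ω * Z ω = 0 := h1
          rcases mul_eq_zero.1 h1' with h | h
          · exact absurd h (ne_of_gt h2)
          · exact h
        have hU0 : Uof P u Z = 0 := by
          show (∫ ω, u (max (Z ω) 0) ∂P) = 0
          rw [integral_eq_zero_of_ae ?_]
          filter_upwards [hZz] with ω h
          simp [h, hu0]
        simp [hU0]
      · rintro e he
        rw [mem_singleton_iff] at he
        subst he
        refine ⟨fun _ => 0, ⟨?_, ?_, ?_, ?_⟩, ?_⟩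
        · simpa using integrable_zero Ω ℝ P
        · simp
        · filter_upwards with ω _; rfl
        · filter_upwards with ω _; exact le_refl 0
        · show ((Uof P u (fun _ => 0) : ℝ) : EReal) = 0
          have : Uof P u (fun _ => 0) = 0 := by
            show (∫ _ω, u (max 0 0) ∂P) = 0
            simp [hu0]
          rw [this]; rfl
    -- competitor for x2
    set c := x2 / (∫ ω in A, ξ ω ∂P) with hc
    have hcpos : 0 < c := div_pos (by linarith) hB
    set Z2 : Ω → ℝ := A.indicator (fun _ => c) with hZ2
    have hxiZ2 : (fun ω => ξ ω * Z2 ω) = A.indicator (fun ω' => c * ξ ω') := by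
      funext ω
      by_cases hω : ω ∈ A <;> simp [hZ2, hω] <;> ring
    have hZ2int : Integrable (fun ω => ξ ω * Z2 ω) P := by
      rw [hxiZ2]; exact (hξint.const_mul c).indicator hA
    have hintZ2 : (∫ ω, ξ ω * Z2 ω ∂P) = x2 := by
      rw [hxiZ2, integral_indicator hA, integral_const_mul, hc]
      field_simp
    have hZ2mem : Z2 ∈ H1 P ξ A x2 := by
      refine ⟨hZ2int, le_of_eq hintZ2, ?_, ?_⟩
      · filter_upwards with ω hω; simp [hZ2, Set.indicator_of_notMem hω]
      · filter_upwards with ω hω; simp [hZ2, Set.indicator_of_mem hω]; exact hcpos.le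
    have hUZ2 : Uof P u Z2 = (P A).toReal * u c := by
      show (∫ ω, u (max (Z2 ω) 0) ∂P) = (P A).toReal * u c
      have heq : (fun ω => u (max (Z2 ω) 0)) = A.indicator (fun _ => u c) := by
        funext ω
        by_cases hω : ω ∈ A
        · simp [hZ2, Set.indicator_of_mem hω, max_eq_left hcpos.le]
        · simp [hZ2, Set.indicator_of_notMem hω, hu0]
      rw [heq, integral_indicator_const _ hA, smul_eq_mul, measureReal_def]
    have hucpos : 0 < u c := by
      have := hu_mono (le_refl (0:ℝ)) hcpos.le hcpos
      rw [hu0] at this; exact this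
    have hUZ2pos : 0 < Uof P u Z2 := by
      rw [hUZ2]
      exact mul_pos (ENNReal.toReal_pos (ne_of_gt hPA) (measure_ne_top P A)) hucpos
    have hle2 : ((Uof P u Z2 : ℝ) : EReal) ≤ Uval P ξ u A x2 :=
      le_sSup ⟨Z2, hZ2mem, rfl⟩
    have h1 : Uval P ξ u A 0 = (0 : EReal) := by
      rw [Uval, him, sSup_singleton]
    rw [h1]
    refine lt_of_lt_of_le ?_ hle2
    exact_mod_cast hUZ2pos
  · -- case 0 < x1
    rcases hsol with h0 | ⟨l, hl, hWint_eq⟩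
    · exact absurd h0 (ne_of_gt hx1pos)
    set W : Ω → ℝ := A.indicator (fun ω' => I (l * ξ ω')) with hWdef
    have hWnn : ∀ᵐ ω ∂P, 0 ≤ W ω := by
      filter_upwards [hξpos] with ω h
      by_cases hω : ω ∈ A
      · rw [hWdef, Set.indicator_of_mem hω]
        exact (hIval (l * ξ ω) (mul_pos hl h)).1
      · rw [hWdef, Set.indicator_of_notMem hω]
    have hξWnn : ∀ᵐ ω ∂P, 0 ≤ ξ ω * W ω := by
      filter_upwards [hξpos, hWnn] with ω h1 h2
      exact mul_nonneg h1.le h2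
    have hWint : Integrable (fun ω => ξ ω * W ω) P := by
      by_contra hni
      rw [integral_undef hni] at hWint_eq
      linarith
    have hWoff : ∀ᵐ ω ∂P, ω ∉ A → W ω = 0 := by
      filter_upwards with ω hω; rw [hWdef, Set.indicator_of_notMem hω]
    have hWon : ∀ᵐ ω ∂P, ω ∈ A → 0 ≤ W ω := by
      filter_upwards [hWnn] with ω h _; exact h
    have hWmem : W ∈ H1 P ξ A x1 := ⟨hWint, le_of_eq hWint_eq, hWoff, hWon⟩
    have hVint : Integrable (fun ω => vconj u (l * ξ ω)) P := hv_int l hl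
    set V := ∫ ω, A.indicator (fun ω' => vconj u (l * ξ ω')) ω ∂P with hV
    set M := V + l * x1 with hM
    have hWeq : (fun ω => u (max (W ω) 0)) =ᵐ[P]
        (fun ω => A.indicator (fun ω' => vconj u (l * ξ ω')) ω + l * (ξ ω * W ω)) := by
      filter_upwards [hξpos] with ω h
      by_cases hω : ω ∈ A
      · have hy : 0 < l * ξ ω := mul_pos hl h
        obtain ⟨hInn, hveq⟩ := hIval (l * ξ ω) hy
        simp only [hWdef, Set.indicator_of_mem hω]
        rw [max_eq_left hInn, hveq]; ring
      · simp [hWdef, Set.indicator_of_notMem hω, hu0]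
    have hUW : Uof P u W = M := by
      show (∫ ω, u (max (W ω) 0) ∂P) = M
      rw [integral_congr_ae hWeq,
        integral_add (hVint.indicator hA) (hWint.const_mul l), integral_const_mul,
        hWint_eq]
    obtain ⟨hWu_int, _⟩ := key_bound P hξm hξpos hu_cont hu_monon hu0 hub hA hl hVint
      hWint hWoff hWon
    -- upper bound on Uval x1
    have hup : Uval P ξ u A x1 ≤ ((M : ℝ) : EReal) := by
      refine sSup_le ?_
      rintro e ⟨Z, ⟨hZi, hZle, hZoff, hZon⟩, rfl⟩
      obtain ⟨_, hZb⟩ := key_bound P hξm hξpos hu_cont hu_monon hu0 hub hA hl hVint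
        hZi hZoff hZon
      have hfin : Uof P u Z ≤ M := by
        refine le_trans hZb ?_
        have h4 := mul_le_mul_of_nonneg_left hZle hl.le
        rw [hM]; rw [hV]; linarith
      show ((Uof P u Z : ℝ) : EReal) ≤ ((M : ℝ) : EReal)
      exact_mod_cast hfin
    -- competitor Z2
    set c := (x2 - x1) / (∫ ω in A, ξ ω ∂P) with hc
    have hcpos : 0 < c := div_pos (by linarith) hB
    set Z2 : Ω → ℝ := fun ω => W ω + A.indicator (fun _ => c) ω with hZ2
    have hxiZ2 : (fun ω => ξ ω * Z2 ω)
        = fun ω => ξ ω * W ω + A.indicator (fun ω' => c * ξ ω') ω := by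
      funext ω
      by_cases hω : ω ∈ A <;> simp [hZ2, hω] <;> ring
    have hZ2int : Integrable (fun ω => ξ ω * Z2 ω) P := by
      rw [hxiZ2]; exact hWint.add ((hξint.const_mul c).indicator hA)
    have hintZ2 : (∫ ω, ξ ω * Z2 ω ∂P) = x2 := by
      rw [hxiZ2, integral_add hWint ((hξint.const_mul c).indicator hA),
        integral_indicator hA, integral_const_mul, hWint_eq, hc]
      field_simp
      ring
    have hZ2off : ∀ᵐ ω ∂P, ω ∉ A → Z2 ω = 0 := by
      filter_upwards with ω hω
      rw [hZ2]
      simp [hWdef, Set.indicator_of_notMem hω]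
    have hZ2on : ∀ᵐ ω ∂P, ω ∈ A → 0 ≤ Z2 ω := by
      filter_upwards [hWnn] with ω h hω
      rw [hZ2]
      simp only [Set.indicator_of_mem hω]
      positivity
    have hZ2mem : Z2 ∈ H1 P ξ A x2 := ⟨hZ2int, le_of_eq hintZ2, hZ2off, hZ2on⟩
    obtain ⟨hZ2u_int, _⟩ := key_bound P hξm hξpos hu_cont hu_monon hu0 hub hA hl hVint
      hZ2int hZ2off hZ2on
    -- strict inequality between Uof W and Uof Z2
    have hlt : Uof P u W < Uof P u Z2 := by
      by_contra hle'
      rw [not_lt] at hle'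
      have hdiff_nn : ∀ᵐ ω ∂P, 0 ≤ u (max (Z2 ω) 0) - u (max (W ω) 0) := by
        filter_upwards [hWnn] with ω h
        by_cases hω : ω ∈ A
        · have hZW : Z2 ω = W ω + c := by rw [hZ2]; simp [Set.indicator_of_mem hω]
          have h2 : W ω ≤ Z2 ω := by rw [hZW]; linarith
          have h3 : (0:ℝ) ≤ Z2 ω := le_trans h h2
          rw [max_eq_left h3, max_eq_left h]
          have := hu_monon h h3 h2
          linarith
        · have h1 : Z2 ω = W ω := by
            rw [hZ2]; simp [Set.indicator_of_notMem hω]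
          rw [h1]; linarith
      have hdiff_int : Integrable (fun ω => u (max (Z2 ω) 0) - u (max (W ω) 0)) P :=
        hZ2u_int.sub hWu_int
      have hdle : (∫ ω, (u (max (Z2 ω) 0) - u (max (W ω) 0)) ∂P) ≤ 0 := by
        rw [integral_sub hZ2u_int hWu_int]
        have e1 : Uof P u Z2 ≤ Uof P u W := hle'
        exact sub_nonpos.mpr e1
      have hd0 : (∫ ω, (u (max (Z2 ω) 0) - u (max (W ω) 0)) ∂P) = 0 :=
        le_antisymm hdle (integral_nonneg_of_ae hdiff_nn)
      have hae0 : (fun ω => u (max (Z2 ω) 0) - u (max (W ω) 0)) =ᵐ[P] 0 :=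
        (integral_eq_zero_iff_of_nonneg_ae hdiff_nn hdiff_int).1 hd0
      have hbad : ∀ᵐ ω ∂P, ω ∉ A := by
        filter_upwards [hae0, hWnn] with ω h1 h2
        intro hω
        have hZW : Z2 ω = W ω + c := by rw [hZ2]; simp [Set.indicator_of_mem hω]
        have h3 : (0:ℝ) ≤ Z2 ω := by rw [hZW]; linarith
        have hsm : u (W ω) < u (Z2 ω) := by
          refine hu_mono h2 h3 ?_
          rw [hZW]; linarith
        have h1' : u (max (Z2 ω) 0) - u (max (W ω) 0) = 0 := h1
        rw [max_eq_left h3, max_eq_left h2] at h1'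
        linarith
      have hPA0 : P A = 0 := by
        rw [ae_iff] at hbad
        refine measure_mono_null ?_ hbad
        intro ω hω
        simp [hω]
      exact absurd hPA0 (ne_of_gt hPA)
    have h2 : ((M : ℝ) : EReal) < ((Uof P u Z2 : ℝ) : EReal) := by
      rw [← hUW]
      exact_mod_cast hlt
    have h3 : ((Uof P u Z2 : ℝ) : EReal) ≤ Uval P ξ u A x2 :=
      le_sSup ⟨Z2, hZ2mem, rfl⟩
    exact lt_of_le_of_lt hup (lt_of_lt_of_le h2 h3)
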